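/- If e₁, …, e_n are pairwise orthogonal nonzero idempotents in a ring R summing to a central idempotent e, and the ring eRe is isomorphic to an n×n matrix ring over a division ring, then each e_i is a primitive idempotent of eRe. -/

import Mathlib

open Matrix

/-- In `Matrix (Fin n) (Fin n) D` over a division ring, a family of pairwise orthogonal
nonzero idempotents has at most `n` members. -/
lemma card_le_of_orthogonal_idem {n : ℕ} {D : Type*} [DivisionRing D]
    {ι : Type*} [Fintype ι] (f : ι → Matrix (Fin n) (Fin n) D)
    (hidem : ∀ j, IsIdempotentElem (f j)) (hne : ∀ j, f j ≠ 0)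
    (horth : ∀ j j', j ≠ j' → f j * f j' = 0) :
    Fintype.card ι ≤ n := by
  classical
  rcases Nat.eq_zero_or_pos n with hn | hn
  · subst hn
    have : IsEmpty ι := by
      refine ⟨fun j => hne j ?_⟩
      ext i
      exact absurd i.2 (by omega)
    simp [Fintype.card_eq_zero]
  -- choose a nonzero entry of each f j
  have hex : ∀ j, ∃ k l, f j k l ≠ 0 := by
    intro j
    by_contra h
    push_neg at h
    exact hne j (by ext k l; simp [h k l])
  choose k l hkl using hex
  set v : ι × Fin n → Matrix (Fin n) (Fin n) D :=
    fun p => Matrix.single p.2 (k p.1) 1 * f p.1 with hv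
  have hli : LinearIndependent D v := by
    rw [Fintype.linearIndependent_iff]
    intro c hc p
    obtain ⟨j0, i0⟩ := p
    -- multiply on the right by f j0
    have hc' : ∑ p : ι × Fin n, c p • (v p * f j0) = 0 := by
      have := congrArg (fun M => M * f j0) hc
      simpa [Finset.sum_mul, smul_mul_assoc] using this
    have hsplit : ∀ p : ι × Fin n, v p * f j0 = if p.1 = j0 then v p else 0 := by
      rintro ⟨j, i⟩
      by_cases h : j = j0
      · subst h
        simp [hv, mul_assoc, (hidem j).eq]
      · simp [hv, mul_assoc, horth j j0 h, h]
    rw [Finset.sum_congr rfl (fun p _ => by rw [hsplit p])] at hc'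
    have hc'' : ∑ i : Fin n, c (j0, i) • v (j0, i) = 0 := by
      rw [Fintype.sum_prod_type] at hc'
      rw [Finset.sum_eq_single j0] at hc'
      · simpa using hc'
      · intro j _ hj
        simp [hj]
      · simp
    -- evaluate at entry (i0, l j0)
    have hentry := congrFun (congrFun hc'' i0) (l j0)
    have : c (j0, i0) * f j0 (k j0) (l j0) = 0 := by
      rw [Matrix.sum_apply] at hentry
      rw [Finset.sum_eq_single i0] at hentry
      · simpa [hv, Matrix.smul_apply] using hentry
      · intro i _ hi
        simp [hv, Matrix.smul_apply, Ne.symm hi]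
      · simp
    rcases mul_eq_zero.mp this with h | h
    · exact h
    · exact absurd h (hkl j0)
  have hcard := hli.fintype_card_le_finrank
  have hfr : Module.finrank D (Matrix (Fin n) (Fin n) D) = n * n := by
    simp [Module.finrank_matrix]
  rw [hfr, Fintype.card_prod, Fintype.card_fin] at hcard
  exact Nat.le_of_mul_le_mul_right hcard hn

theorem orthogonal_idempotents_primitive (R : Type*) [Ring R] (n : ℕ)
    (D : Type*) [DivisionRing D]
    (e : R) (he : IsIdempotentElem e) (hcentral : ∀ r : R, e * r = r * e)
    (E : Fin n → R) (hidem : ∀ i, IsIdempotentElem (E i)) (hne : ∀ i, E i ≠ 0)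
    (horth : ∀ i j, i ≠ j → E i * E j = 0) (hsum : ∑ i, E i = e)
    (hiso : Nonempty
      ((TwoSidedIdeal.span ({1 - e} : Set R)).ringCon.Quotient ≃+* Matrix (Fin n) (Fin n) D)) :
    ∀ i, ¬ ∃ a b : R, e * a * e = a ∧ e * b * e = b ∧
      IsIdempotentElem a ∧ IsIdempotentElem b ∧ a ≠ 0 ∧ b ≠ 0 ∧
      a * b = 0 ∧ b * a = 0 ∧ E i = a + b := by
  rintro i ⟨a, b, hae, hbe, ha, hb, ha0, hb0, hab, hba, hE⟩
  obtain ⟨ψ⟩ := hiso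
  set c := (TwoSidedIdeal.span ({1 - e} : Set R)).ringCon with hc
  -- the two-sided ideal of elements killed by e ∙ e
  set K : TwoSidedIdeal R := TwoSidedIdeal.mk' {y | e * y * e = 0}
    (by simp)
    (fun {x y} hx hy => by
      simp only [Set.mem_setOf_eq] at *
      rw [mul_add, add_mul, hx, hy, add_zero])
    (fun {x} hx => by
      simp only [Set.mem_setOf_eq] at *
      rw [mul_neg, neg_mul, hx, neg_zero])
    (fun {x y} hy => by
      simp only [Set.mem_setOf_eq] at *
      calc e * (x * y) * e = x * (e * y * e) := by
            rw [← mul_assoc, hcentral x, mul_assoc, mul_assoc, mul_assoc]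
        _ = 0 := by rw [hy, mul_zero])
    (fun {x y} hx => by
      simp only [Set.mem_setOf_eq] at *
      calc e * (x * y) * e = (e * x * e) * y := by
            rw [mul_assoc, mul_assoc, ← hcentral y, ← mul_assoc, ← mul_assoc]
        _ = 0 := by rw [hx, zero_mul]) with hK
  have hKmem : ∀ y, y ∈ K ↔ e * y * e = 0 := fun y => TwoSidedIdeal.mem_mk' _ _ _ _ _ _ y
  -- elements fixed by e ∙ e that vanish in the quotient are zero
  have hker : ∀ x : R, e * x * e = x → (x : c.Quotient) = 0 → x = 0 := by
    intro x hx h0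
    have hmem : x ∈ TwoSidedIdeal.span ({1 - e} : Set R) := by
      rw [TwoSidedIdeal.mem_iff]
      rw [← RingCon.coe_zero] at h0
      exact c.eq.mp h0
    have hxK : x ∈ K := by
      rw [TwoSidedIdeal.mem_span_iff] at hmem
      refine hmem K ?_
      intro y hy
      rcases hy with rfl
      rw [SetLike.mem_coe, hKmem]
      have : e * (1 - e) = 0 := by
        rw [mul_sub, mul_one, he.eq, sub_self]
      rw [this, zero_mul]
    rw [hKmem] at hxK
    rw [hx] at hxK
    exact hxK
  -- the composite map
  set F : R → Matrix (Fin n) (Fin n) D := fun x => ψ (x : c.Quotient) with hF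
  have hFmul : ∀ x y : R, F (x * y) = F x * F y := by
    intro x y
    simp [hF, RingCon.coe_mul, _root_.map_mul]
  have hF0 : F 0 = 0 := by simp [hF, ← RingCon.coe_zero]
  -- e * E j * e = E j
  have heE : ∀ j, e * E j * e = E j := by
    intro j
    have h1 : e * E j = E j := by
      rw [← hsum, Finset.sum_mul, Finset.sum_eq_single j]
      · exact (hidem j).eq
      · intro m _ hm; exact horth m j hm
      · simp
    have h2 : E j * e = E j := by
      rw [← hsum, Finset.mul_sum, Finset.sum_eq_single j]
      · exact (hidem j).eq
      · intro m _ hm; exact horth j m (Ne.symm hm)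
      · simp
    rw [h1, h2]
  have haE : a * E i = a := by
    rw [hE, mul_add, ha.eq, hab, add_zero]
  have hEa : E i * a = a := by
    rw [hE, add_mul, ha.eq, hba, add_zero]
  have hbE : b * E i = b := by
    rw [hE, mul_add, hb.eq, hba, zero_add]
  have hEb : E i * b = b := by
    rw [hE, add_mul, hb.eq, hab, zero_add]
  -- family of n+1 orthogonal nonzero idempotents, indexed by Option (Fin n)
  set u : Option (Fin n) → R := fun o => o.elim b (fun j => if j = i then a else E j) with hu
  have hue : ∀ o, e * u o * e = u o := by
    rintro (_ | j)
    · exact hbe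
    · by_cases h : j = i <;> simp [hu, h, hae, heE]
  have huid : ∀ o, IsIdempotentElem (u o) := by
    rintro (_ | j)
    · exact hb
    · by_cases h : j = i <;> simp [hu, h, ha, hidem j]
  have hun : ∀ o, u o ≠ 0 := by
    rintro (_ | j)
    · exact hb0
    · by_cases h : j = i <;> simp [hu, h, ha0, hne j]
  have huo : ∀ o o', o ≠ o' → u o * u o' = 0 := by
    rintro (_ | j) (_ | j') hne'
    · exact absurd rfl hne'
    · by_cases h : j' = i
      · simpa [hu, h] using hba
      · show b * (if j' = i then a else E j') = 0
        rw [if_neg h, ← hbE, mul_assoc, horth i j' (fun hh => h hh.symm), mul_zero]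
    · by_cases h : j = i
      · simpa [hu, h] using hab
      · show (if j = i then a else E j) * b = 0
        rw [if_neg h, ← hEb, ← mul_assoc, horth j i h, zero_mul]
    · have hjj' : j ≠ j' := by
        intro hh; exact hne' (by rw [hh])
      show (if j = i then a else E j) * (if j' = i then a else E j') = 0
      by_cases h : j = i
      · subst h
        rw [if_pos rfl, if_neg (Ne.symm hjj'), ← haE, mul_assoc,
          horth j j' hjj', mul_zero]
      · by_cases h' : j' = i
        · subst h'
          rw [if_neg h, if_pos rfl, ← hEa, ← mul_assoc, horth j j' hjj', zero_mul]
        · rw [if_neg h, if_neg h']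
          exact horth j j' hjj'
  -- push to matrices
  set f : Option (Fin n) → Matrix (Fin n) (Fin n) D := fun o => F (u o) with hf
  have hfid : ∀ o, IsIdempotentElem (f o) := by
    intro o
    show f o * f o = f o
    rw [hf, ← hFmul, (huid o).eq]
  have hfn : ∀ o, f o ≠ 0 := by
    intro o h
    apply hun o
    apply hker (u o) (hue o)
    have : ψ ((u o : c.Quotient)) = ψ (0 : c.Quotient) := by
      rw [map_zero]; exact h
    exact ψ.injective this
  have hfo : ∀ o o', o ≠ o' → f o * f o' = 0 := by
    intro o o' h
    rw [hf, ← hFmul, huo o o' h, hF0]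
  have hcard := card_le_of_orthogonal_idem f hfid hfn hfo
  have hi := i.2
  rw [Fintype.card_option, Fintype.card_fin] at hcard
  omega
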